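/- Let (N, K_min, v) be a minimal incomplete game with total excess Δ ≥ 0 and let ṽ = (1/n) Σ_{i∈N} v^i be the centre of gravity of the extreme games. Then the average Shapley value satisfies φ_i(ṽ) = v({i}) + Δ/n for every i ∈ N, where φ is the Shapley value. -/

import Mathlib

noncomputable section

open Finset

/-- The upper (utopia) vector `b^w` of a cooperative game `w` on `N = {1,…,n}`. -/
def bvec (n : ℕ) (w : Finset (Fin n) → ℝ) (i : Fin n) : ℝ :=
  w Finset.univ - w (Finset.univ \ {i})

/-- A cooperative game `w` is 1-convex: for every nonempty coalition `S`,
`w S ≤ w N - b^w(N \ S)`, and `b^w(N) ≥ w N`. -/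
def OneConvex (n : ℕ) (w : Finset (Fin n) → ℝ) : Prop :=
  (∀ S : Finset (Fin n), S.Nonempty →
      w S ≤ w Finset.univ - ∑ i ∈ Finset.univ \ S, bvec n w i) ∧
  w Finset.univ ≤ ∑ i : Fin n, bvec n w i

/-- The set of 1-convex extensions of an incomplete game `(N, K, v)`:
cooperative games (`w ∅ = 0`) that are 1-convex and agree with `v` on `K`. -/
def Cext (n : ℕ) (K : Finset (Finset (Fin n))) (v : Finset (Fin n) → ℝ) :
    Set (Finset (Fin n) → ℝ) :=
  {w | w ∅ = 0 ∧ OneConvex n w ∧ ∀ S ∈ K, w S = v S}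

/-- `K_min`: the empty coalition, the grand coalition and all singletons. -/
def KminF (n : ℕ) : Finset (Finset (Fin n)) :=
  {∅, Finset.univ} ∪ Finset.univ.image (fun i => ({i} : Finset (Fin n)))

/-- The total excess `Δ = v(N) - ∑_{i ∈ N} v({i})`. -/
def totalExcess (n : ℕ) (v : Finset (Fin n) → ℝ) : ℝ :=
  v Finset.univ - ∑ i : Fin n, v {i}

/-- A minimal incomplete game (only the values on `K_min` are relevant) that is
1-convex-extendable, i.e. `v ∅ = 0` and `Δ ≥ 0`. -/
def MinExtendable (n : ℕ) (v : Finset (Fin n) → ℝ) : Prop :=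
  v ∅ = 0 ∧ 0 ≤ totalExcess n v

/-- The extreme games `v^i` of the set of 1-convex extensions of a minimal
incomplete game. -/
def extGame (n : ℕ) (v : Finset (Fin n) → ℝ) (i : Fin n) (S : Finset (Fin n)) : ℝ :=
  if S ∈ KminF n then v S
  else if i ∈ S then v Finset.univ - ∑ j ∈ Finset.univ \ S, v {j}
  else v Finset.univ - ∑ j ∈ Finset.univ \ S, v {j} - totalExcess n v

/-- The upper game of the set of 1-convex extensions of a minimal incomplete game. -/
def upperGameMin (n : ℕ) (v : Finset (Fin n) → ℝ) (S : Finset (Fin n)) : ℝ :=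
  if S ∈ KminF n then v S else v Finset.univ - ∑ i ∈ Finset.univ \ S, v {i}

/-- The index set `E = 2^N \ ({∅, N} ∪ {{i}} ∪ {N \ {i}})` of extreme rays. -/
def ESetMin (n : ℕ) : Finset (Finset (Fin n)) :=
  Finset.univ \
    (KminF n ∪ Finset.univ.image (fun i => Finset.univ \ ({i} : Finset (Fin n))))

/-- The extreme-ray game `e_T`: value `-1` on `T` and `0` elsewhere. -/
def eRay (n : ℕ) (T S : Finset (Fin n)) : ℝ := if S = T then -1 else 0

/-- The centre of gravity `ṽ = (1/n) ∑_i v^i` of the extreme games. -/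
def tildeV (n : ℕ) (v : Finset (Fin n) → ℝ) (S : Finset (Fin n)) : ℝ :=
  (∑ i : Fin n, extGame n v i S) / (n : ℝ)

/-- The centre of gravity `ẽ = (1/|E|) ∑_{T ∈ E} e_T` of the extreme rays
(minimal incomplete case). -/
def tildeEMin (n : ℕ) (S : Finset (Fin n)) : ℝ :=
  (∑ T ∈ ESetMin n, eRay n T S) / ((ESetMin n).card : ℝ)

/-- The gap function `g^w(S) = b^w(S) - w(S)`. -/
def gapF (n : ℕ) (w : Finset (Fin n) → ℝ) (S : Finset (Fin n)) : ℝ :=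
  (∑ i ∈ S, bvec n w i) - w S

/-- The τ-value of a 1-convex game: `τ_i(w) = b^w_i - g^w(N)/n`. -/
def tauVal (n : ℕ) (w : Finset (Fin n) → ℝ) (i : Fin n) : ℝ :=
  bvec n w i - gapF n w Finset.univ / (n : ℝ)

/-- The Shapley value. -/
def shapley (n : ℕ) (w : Finset (Fin n) → ℝ) (i : Fin n) : ℝ :=
  ∑ S ∈ Finset.univ.filter (fun S : Finset (Fin n) => i ∈ S),
    ((Nat.factorial (S.card - 1) * Nat.factorial (n - S.card) : ℕ) : ℝ) /
        (Nat.factorial n : ℝ) * (w S - w (S \ {i}))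

/-- The concession vector `λ^w_i = min_{S ∋ i} g^w(S)`. -/
def concession (n : ℕ) (w : Finset (Fin n) → ℝ) (i : Fin n) : ℝ :=
  (Finset.univ.filter (fun S : Finset (Fin n) => i ∈ S)).inf'
    ⟨{i}, by simp⟩ (gapF n w)

/-- The minimal right vector `a^w = b^w - λ^w`. -/
def minRight (n : ℕ) (w : Finset (Fin n) → ℝ) (i : Fin n) : ℝ :=
  bvec n w i - concession n w i

/-- The average value `ζ̃_i(v) = v({i}) + Δ/n` of a minimal incomplete game. -/
def avgValue (n : ℕ) (v : Finset (Fin n) → ℝ) (i : Fin n) : ℝ :=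
  v {i} + totalExcess n v / (n : ℝ)

/-- The zero-normalised game of a minimal incomplete game: value `Δ` on the
grand coalition and `0` on all other coalitions. -/
def zeroNorm (n : ℕ) (v : Finset (Fin n) → ℝ) (S : Finset (Fin n)) : ℝ :=
  if S = Finset.univ then totalExcess n v else 0

/-- The upper game `v̄` for incomplete games with defined upper vector. -/
def upperGameK (n : ℕ) (K : Finset (Finset (Fin n))) (v : Finset (Fin n) → ℝ)
    (S : Finset (Fin n)) : ℝ :=
  if S ∈ K then v S else v Finset.univ - ∑ i ∈ Finset.univ \ S, bvec n v i

/-- The centre of gravity `ẽ = (1/|E|) ∑_{T ∉ K} e_T` of the extreme rays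
(defined upper vector case), where `E = 2^N \ K`. -/
def tildeEK (n : ℕ) (K : Finset (Finset (Fin n))) (S : Finset (Fin n)) : ℝ :=
  (∑ T ∈ Finset.univ \ K, eRay n T S) / (((Finset.univ \ K).card : ℝ))

lemma kmin_mem_iff (n : ℕ) (S : Finset (Fin n)) :
    S ∈ KminF n ↔ S = ∅ ∨ S = Finset.univ ∨ ∃ j, S = {j} := by
  simp [KminF, eq_comm]

lemma excess_one (v : Finset (Fin 1) → ℝ) : totalExcess 1 v = 0 := by
  rw [totalExcess, Fin.sum_univ_one,
    show (Finset.univ : Finset (Fin 1)) = {0} from rfl, sub_self]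

lemma tildeV_eq (n : ℕ) (hn : 0 < n) (v : Finset (Fin n) → ℝ) (hv : v ∅ = 0)
    (S : Finset (Fin n)) :
    tildeV n v S = (∑ j ∈ S, v {j}) +
      totalExcess n v / (n : ℝ) * ((S.card : ℝ) - if S.card = 1 then 1 else 0) := by
  have hn' : (n : ℝ) ≠ 0 := Nat.cast_ne_zero.mpr hn.ne'
  by_cases h : S ∈ KminF n
  · have hsum : ∑ i : Fin n, extGame n v i S = (n : ℝ) * v S := by
      simp [extGame, h, Finset.sum_const, mul_comm]
    rw [tildeV, hsum, mul_div_cancel_left₀ _ hn']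
    rcases (kmin_mem_iff n S).mp h with rfl | rfl | ⟨j, rfl⟩
    · simp [hv]
    · rw [Finset.card_univ, Fintype.card_fin]
      have hexc : v Finset.univ = (∑ j : Fin n, v {j}) + totalExcess n v := by
        rw [totalExcess]; ring
      by_cases h1 : n = 1
      · subst h1
        rw [excess_one] at hexc ⊢
        simpa using hexc
      · rw [if_neg h1, hexc, sub_zero, div_mul_cancel₀ _ hn']
    · simp
  · have hne : S.card ≠ 1 := by
      intro hc
      obtain ⟨a, rfl⟩ := Finset.card_eq_one.mp hc
      exact h ((kmin_mem_iff n _).mpr (Or.inr (Or.inr ⟨a, rfl⟩)))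
    set X := v Finset.univ - ∑ j ∈ Finset.univ \ S, v {j} with hX
    have h1 : ∑ i ∈ S, extGame n v i S = (S.card : ℝ) * X := by
      rw [Finset.sum_congr rfl (fun i hi => ?_), Finset.sum_const, nsmul_eq_mul]
      simp only [extGame, if_neg h, if_pos hi]
      rw [hX]
    have h2 : ∑ i ∈ Finset.univ \ S, extGame n v i S
        = ((Finset.univ \ S).card : ℝ) * (X - totalExcess n v) := by
      rw [Finset.sum_congr rfl (fun i hi => ?_), Finset.sum_const, nsmul_eq_mul]
      have hiS : i ∉ S := (Finset.mem_sdiff.mp hi).2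
      simp only [extGame, if_neg h, if_neg hiS]
      rw [hX]
    have hcard : ((Finset.univ \ S).card : ℝ) = (n : ℝ) - (S.card : ℝ) := by
      rw [Finset.card_sdiff_of_subset (Finset.subset_univ S), Finset.card_univ, Fintype.card_fin,
        Nat.cast_sub (by simpa using Finset.card_le_univ S)]
    have hXval : X = (∑ j ∈ S, v {j}) + totalExcess n v := by
      rw [hX, totalExcess, ← Finset.sum_sdiff (Finset.subset_univ S)]
      ring
    have hsplit : ∑ i : Fin n, extGame n v i S
        = ∑ i ∈ Finset.univ \ S, extGame n v i S + ∑ i ∈ S, extGame n v i S :=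
      (Finset.sum_sdiff (Finset.subset_univ S)).symm
    rw [tildeV, hsplit, h1, h2, hcard, hXval, if_neg hne]
    field_simp
    ring

lemma tildeV_marg (n : ℕ) (hn : 0 < n) (v : Finset (Fin n) → ℝ) (hv : v ∅ = 0)
    (i : Fin n) (S : Finset (Fin n)) (hiS : i ∈ S) :
    tildeV n v S - tildeV n v (S \ {i}) = v {i} + totalExcess n v / (n : ℝ) *
      (1 - (if S.card = 1 then 1 else 0) + (if S.card = 2 then 1 else 0)) := by
  have hSd : S \ {i} = S.erase i := by rw [Finset.erase_eq]
  have hpos : 1 ≤ S.card := Finset.card_pos.mpr ⟨i, hiS⟩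
  have hc : (S.erase i).card = S.card - 1 := Finset.card_erase_of_mem hiS
  have hsum : ∑ j ∈ S.erase i, v {j} = (∑ j ∈ S, v {j}) - v {i} :=
    Finset.sum_erase_eq_sub hiS
  rw [tildeV_eq n hn v hv S, tildeV_eq n hn v hv (S \ {i}), hSd, hsum, hc]
  have hcast : ((S.card - 1 : ℕ) : ℝ) = (S.card : ℝ) - 1 := by
    rw [Nat.cast_sub hpos, Nat.cast_one]
  by_cases h1 : S.card = 1
  · rw [h1]; norm_num
  · by_cases h2 : S.card = 2
    · rw [h2]
      norm_num
      ring
    · have e1 : S.card - 1 ≠ 1 := by omega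
      rw [if_neg h1, if_neg h2, if_neg e1, hcast]
      ring

/-- the average Shapley value of a minimal incomplete game with
`Δ ≥ 0` satisfies `φ_i(ṽ) = v({i}) + Δ/n`. -/
theorem stmt_8 (n : ℕ) (hn : 0 < n) (v : Finset (Fin n) → ℝ) (hv : v ∅ = 0)
    (hΔ : 0 ≤ totalExcess n v) :
    ∀ i : Fin n, shapley n (tildeV n v) i = v {i} + totalExcess n v / (n : ℝ) := by
  intro i
  set Δ : ℝ := totalExcess n v with hΔdef
  set F : ℕ → ℝ := fun s =>
    ((Nat.factorial (s - 1) * Nat.factorial (n - s) : ℕ) : ℝ) / (Nat.factorial n : ℝ) *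
      (v {i} + Δ / (n : ℝ) *
        (1 - (if s = 1 then 1 else 0) + (if s = 2 then 1 else 0))) with hF
  have step1 : shapley n (tildeV n v) i
      = ∑ S ∈ Finset.univ.filter (fun S : Finset (Fin n) => i ∈ S), F S.card := by
    rw [shapley]
    refine Finset.sum_congr rfl fun S hS => ?_
    have hiS : i ∈ S := (Finset.mem_filter.mp hS).2
    rw [tildeV_marg n hn v hv i S hiS, hF]
  have step2 : ∑ S ∈ Finset.univ.filter (fun S : Finset (Fin n) => i ∈ S), F S.card
      = ∑ T ∈ (Finset.univ.erase i).powerset, F (T.card + 1) := by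
    refine Finset.sum_nbij' (fun S => S.erase i) (fun T => insert i T) ?_ ?_ ?_ ?_ ?_
    · intro S hS
      exact Finset.mem_powerset.mpr
        (Finset.erase_subset_erase i (Finset.subset_univ S))
    · intro T _
      simp
    · intro S hS
      exact Finset.insert_erase (Finset.mem_filter.mp hS).2
    · intro T hT
      exact Finset.erase_insert fun hiT =>
        (Finset.mem_erase.mp (Finset.mem_powerset.mp hT hiT)).1 rfl
    · intro S hS
      have hiS : i ∈ S := (Finset.mem_filter.mp hS).2
      have : (S.erase i).card + 1 = S.card := by
        rw [Finset.card_erase_of_mem hiS]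
        have := Finset.card_pos.mpr ⟨i, hiS⟩
        omega
      rw [this]
  have hcard : (Finset.univ.erase i).card = n - 1 := by
    rw [Finset.card_erase_of_mem (Finset.mem_univ i), Finset.card_univ, Fintype.card_fin]
  have step3 : ∑ T ∈ (Finset.univ.erase i).powerset, F (T.card + 1)
      = ∑ k ∈ Finset.range n, ((n - 1).choose k : ℝ) * F (k + 1) := by
    rw [Finset.sum_powerset, hcard, show n - 1 + 1 = n from by omega]
    refine Finset.sum_congr rfl fun k hk => ?_
    rw [Finset.sum_congr rfl
        (fun T hT => by rw [(Finset.mem_powersetCard.mp hT).2]),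
      Finset.sum_const, Finset.card_powersetCard, hcard, nsmul_eq_mul]
  have hn' : (n : ℝ) ≠ 0 := Nat.cast_ne_zero.mpr hn.ne'
  have hfactn : (Nat.factorial n : ℝ) = (n : ℝ) * (Nat.factorial (n - 1) : ℝ) := by
    cases n with
    | zero => omega
    | succ m => push_cast [Nat.factorial_succ]; simp
  have hfpos : (0 : ℝ) < (Nat.factorial (n - 1) : ℝ) := by
    exact_mod_cast Nat.factorial_pos (n - 1)
  have step4 : ∀ k ∈ Finset.range n, ((n - 1).choose k : ℝ) * F (k + 1)
      = (1 / (n : ℝ)) * (v {i} + Δ / (n : ℝ))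
        + (if k = 0 then -(1 / (n : ℝ)) * (Δ / (n : ℝ)) else 0)
        + (if k = 1 then (1 / (n : ℝ)) * (Δ / (n : ℝ)) else 0) := by
    intro k hk
    have hkn : k ≤ n - 1 := by
      have := Finset.mem_range.mp hk; omega
    have hch : (n - 1).choose k * Nat.factorial k * Nat.factorial (n - 1 - k)
        = Nat.factorial (n - 1) := Nat.choose_mul_factorial_mul_factorial hkn
    have hchR : ((n - 1).choose k : ℝ) * (Nat.factorial k : ℝ)
        * (Nat.factorial (n - 1 - k) : ℝ) = (Nat.factorial (n - 1) : ℝ) := by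
      exact_mod_cast hch
    have e1 : k + 1 - 1 = k := by omega
    have e2 : n - (k + 1) = n - 1 - k := by omega
    rw [hF]
    simp only [e1, e2]
    have hcoef : ((Nat.factorial k * Nat.factorial (n - 1 - k) : ℕ) : ℝ)
        / (Nat.factorial n : ℝ) * ((n - 1).choose k : ℝ) = 1 / (n : ℝ) := by
      push_cast
      rw [hfactn]
      field_simp
      nlinarith [hchR]
    have hrw : ((n - 1).choose k : ℝ)
        * (((Nat.factorial k * Nat.factorial (n - 1 - k) : ℕ) : ℝ)
            / (Nat.factorial n : ℝ)
          * (v {i} + Δ / (n : ℝ) * (1 - (if k + 1 = 1 then 1 else 0)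
              + (if k + 1 = 2 then 1 else 0))))
        = (1 / (n : ℝ)) * (v {i} + Δ / (n : ℝ) * (1 - (if k + 1 = 1 then 1 else 0)
              + (if k + 1 = 2 then 1 else 0))) := by
      rw [← mul_assoc, mul_comm ((n - 1).choose k : ℝ), hcoef]
    rw [hrw]
    by_cases hk0 : k = 0
    · subst hk0
      norm_num
      ring
    · by_cases hk1 : k = 1
      · subst hk1; norm_num; ring
      · have : k + 1 ≠ 1 := by omega
        have h2 : k + 1 ≠ 2 := by omega
        rw [if_neg this, if_neg h2, if_neg hk0, if_neg hk1]
        ring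
  rw [step1, step2, step3, Finset.sum_congr rfl step4]
  rw [Finset.sum_add_distrib, Finset.sum_add_distrib, Finset.sum_const,
    Finset.card_range, Finset.sum_ite_eq' (Finset.range n) 0,
    Finset.sum_ite_eq' (Finset.range n) 1]
  have h0 : (0 : ℕ) ∈ Finset.range n := Finset.mem_range.mpr hn
  rw [if_pos h0, nsmul_eq_mul]
  have hbase : (n : ℝ) * ((1 / (n : ℝ)) * (v {i} + Δ / (n : ℝ)))
      = v {i} + Δ / (n : ℝ) := by
    field_simp
  rw [hbase]
  by_cases h2 : 1 < n
  · rw [if_pos (Finset.mem_range.mpr h2)]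
    ring
  · have hn1 : n = 1 := by omega
    have hΔ0 : Δ = 0 := by
      rw [hΔdef]; subst hn1; exact excess_one v
    rw [hΔ0]
    simp
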